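/- arXiv:2503.01141 — 2 statements merged into one kernel-verified Lean document; each statement's English description precedes it below -/
import Mathlib

section
/- (Converse/upper-bound direction of Theorem 1.) For any total budget B ∈ ℕ and any allocation t : Fin n → ℕ with ∑ i, t i ≤ B, the number of correctly answered questions satisfies card {i | τ i ≤ (t i : ℕ∞)} ≤ max { k : k ≤ L.length and (L.take k).sum ≤ B }. -/
/-- There are `n` questions with token complexities `τ : Fin n → ℕ∞`
(`τ i = ⊤` means question `i` is unsolvable at any response length).
Under the token complexity hypothesis, an allocation of response lengths
`t : Fin n → ℕ` answers question `i` correctly iff `τ i ≤ (t i : ℕ∞)`.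
`Astar n τ B` is the maximum number of correctly answered questions over
all allocations with total length at most `B`. -/
noncomputable def Astar (n : ℕ) (τ : Fin n → ℕ∞) (B : ℕ) : ℕ :=
  sSup { c : ℕ | ∃ t : Fin n → ℕ, (∑ i, t i) ≤ B ∧
    (Finset.univ.filter (fun i => τ i ≤ (t i : ℕ∞))).card = c }

/-- `Tstar n τ m` is the minimum total token budget `∑ i, t i` over all
allocations `t : Fin n → ℕ` answering at least `m` questions correctly. -/
noncomputable def Tstar (n : ℕ) (τ : Fin n → ℕ∞) (m : ℕ) : ℕ :=
  sInf { s : ℕ | ∃ t : Fin n → ℕ,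
    m ≤ (Finset.univ.filter (fun i => τ i ≤ (t i : ℕ∞))).card ∧ (∑ i, t i) = s }

/-- `sortedL n τ` is the list of the values `(τ i).toNat` over all indices `i`
with `τ i < ⊤`, sorted in increasing order. -/
def sortedL (n : ℕ) (τ : Fin n → ℕ∞) : List ℕ :=
  Multiset.sort
    (Multiset.map (fun i => (τ i).toNat) (Finset.univ.filter (fun i => τ i < ⊤)).val) (· ≤ ·)

lemma take_sum_le_of_sublist : ∀ {l' l : List ℕ}, List.Sublist l' l → l.Pairwise (· ≤ ·) →
    (l.take l'.length).sum ≤ l'.sum := by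
  intro l' l h
  induction h with
  | slnil => simp
  | @cons l₁ l₂ a h ih =>
    intro hs
    have hs₂ : l₂.Pairwise (· ≤ ·) := hs.of_cons
    match l₁ with
    | [] => simp
    | (b :: l₁') =>
      have hklt : l₁'.length < l₂.length := by
        have := h.length_le; simpa using this
      have htake : l₂.take l₁'.length ++ [l₂[l₁'.length]] = l₂.take (l₁'.length + 1) :=
        List.take_concat_get' l₂ _ hklt
      have ha : a ≤ l₂[l₁'.length] := by
        rcases List.pairwise_cons.mp hs with ⟨ha, _⟩
        exact ha _ (List.getElem_mem hklt)
      calc ((a :: l₂).take (b :: l₁').length).sum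
          = a + (l₂.take l₁'.length).sum := by simp
        _ ≤ l₂[l₁'.length] + (l₂.take l₁'.length).sum := by omega
        _ = (l₂.take (l₁'.length + 1)).sum := by rw [← htake, List.sum_append]; simp [Nat.add_comm]
        _ ≤ (b :: l₁').sum := ih hs₂
  | @cons_cons l₁ l₂ a h ih =>
    intro hs
    simp only [List.length_cons, List.take_succ_cons, List.sum_cons]
    exact Nat.add_le_add_left (ih hs.of_cons) a

/-- Converse/upper-bound direction of Theorem 1: any allocation within budget
`B` answers at most `max { k : k ≤ L.length ∧ (L.take k).sum ≤ B }` questions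
correctly. -/
theorem correct_count_le_greedy (n : ℕ) (τ : Fin n → ℕ∞) (B : ℕ)
    (t : Fin n → ℕ) (ht : ∑ i, t i ≤ B) :
    (Finset.univ.filter (fun i => τ i ≤ (t i : ℕ∞))).card
      ≤ sSup { k : ℕ | k ≤ (sortedL n τ).length ∧ ((sortedL n τ).take k).sum ≤ B } := by
  set S := Finset.univ.filter (fun i => τ i ≤ (t i : ℕ∞)) with hS
  set L := sortedL n τ with hL
  set M : Multiset ℕ := S.val.map (fun i => (τ i).toNat) with hM
  have hsub : S ⊆ Finset.univ.filter (fun i => τ i < ⊤) := by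
    intro i hi
    simp only [hS, Finset.mem_filter, Finset.mem_univ, true_and] at hi ⊢
    exact lt_of_le_of_lt hi (by exact_mod_cast WithTop.coe_lt_top (t i))
  have hMle : M ≤ Multiset.map (fun i => (τ i).toNat)
      (Finset.univ.filter (fun i => τ i < ⊤)).val :=
    Multiset.map_le_map (Finset.val_le_iff.mpr hsub)
  -- sorted list of M is a sublist of L
  have hsorted : List.Sublist (Multiset.sort M (· ≤ ·)) L := by
    apply List.sublist_of_subperm_of_pairwise (r := (· ≤ ·))
    · rw [← Multiset.coe_le]
      simpa [hL, sortedL] using hMle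
    · exact Multiset.pairwise_sort _ _
    · exact Multiset.pairwise_sort _ _
  have hLsorted : L.Pairwise (· ≤ ·) := Multiset.pairwise_sort _ _
  have hlen : (Multiset.sort M (· ≤ ·)).length = S.card := by
    simp [hM]
  have hsum : (Multiset.sort M (· ≤ ·)).sum ≤ B := by
    have : (Multiset.sort M (· ≤ ·)).sum = M.sum := by
      rw [← Multiset.sum_coe]; exact congrArg _ (Multiset.sort_eq _ _)
    rw [this, hM, Finset.sum_map_val]
    refine le_trans (Finset.sum_le_sum (fun i hi => ?_)) (le_trans (Finset.sum_le_sum_of_subset (Finset.subset_univ S)) ht)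
    simp only [hS, Finset.mem_filter, Finset.mem_univ, true_and] at hi
    exact ENat.toNat_le_of_le_coe hi
  have hmem : S.card ∈ { k : ℕ | k ≤ L.length ∧ (L.take k).sum ≤ B } := by
    constructor
    · rw [← hlen]; exact hsorted.length_le
    · rw [← hlen]
      exact le_trans (take_sum_le_of_sublist hsorted hLsorted) hsum
  exact le_csSup ⟨L.length, fun x hx => hx.1⟩ hmem
end

section
/- (Achievability/greedy direction of Theorem 1.) For any total budget B ∈ ℕ and any k ≤ L.length with (L.take k).sum ≤ B, there exists an allocation t : Fin n → ℕ with ∑ i, t i ≤ B that answers at least k questions correctly: card {i | τ i ≤ (t i : ℕ∞)} ≥ k. Such an allocation is obtained by assigning t i = (τ i).toNat to the k solvable questions with the smallest token complexities and t i = 0 to all other questions. -/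
lemma exists_of_le_map {α β : Type*} [DecidableEq α] [DecidableEq β]
    {f : α → β} {s : Multiset β} {t : Multiset α} (h : s ≤ t.map f) :
    ∃ u ≤ t, u.map f = s := by
  induction s using Multiset.induction generalizing t with
  | empty => exact ⟨0, Multiset.zero_le t, rfl⟩
  | cons a s ih =>
    have ha : a ∈ t.map f := Multiset.mem_of_le h (Multiset.mem_cons_self a s)
    obtain ⟨b, hb, hfb⟩ := Multiset.mem_map.mp ha
    have hs : s ≤ (t.erase b).map f := by
      rw [Multiset.map_erase_of_mem _ _ hb, hfb]
      have := Multiset.erase_le_erase a h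
      simpa using this
    obtain ⟨u, hu, hmap⟩ := ih hs
    refine ⟨b ::ₘ u, ?_, by simp [hmap, hfb]⟩
    calc b ::ₘ u ≤ b ::ₘ t.erase b := Multiset.cons_le_cons b hu
    _ = t := Multiset.cons_erase hb

/-- Achievability/greedy direction of Theorem 1: if the sum of the `k` smallest
finite token complexities is at most `B`, there is an allocation within budget
`B` answering at least `k` questions correctly. -/
theorem greedy_achievable (n : ℕ) (τ : Fin n → ℕ∞) (B k : ℕ)
    (hk : k ≤ (sortedL n τ).length) (hsum : ((sortedL n τ).take k).sum ≤ B) :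
    ∃ t : Fin n → ℕ, (∑ i, t i) ≤ B ∧
      k ≤ (Finset.univ.filter (fun i => τ i ≤ (t i : ℕ∞))).card := by
  classical
  set S : Finset (Fin n) := Finset.univ.filter (fun i => τ i < ⊤) with hS
  set f : Fin n → ℕ := fun i => (τ i).toNat with hf
  have hsort : ((sortedL n τ) : Multiset ℕ) = S.val.map f := by
    simp [sortedL, hS, hf, Multiset.sort_eq]
  have htake : (((sortedL n τ).take k : List ℕ) : Multiset ℕ) ≤ S.val.map f := by
    rw [← hsort]
    exact Multiset.coe_le.mpr ((sortedL n τ).take_sublist k).subperm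
  obtain ⟨u, hu, hmap⟩ := exists_of_le_map htake
  have hnodup : u.Nodup := Multiset.nodup_of_le hu S.nodup
  set T : Finset (Fin n) := ⟨u, hnodup⟩ with hT
  have hTS : T ⊆ S := fun x hx => Multiset.mem_of_le hu hx
  refine ⟨fun i => if i ∈ T then f i else 0, ?_, ?_⟩
  · have : (∑ i, if i ∈ T then f i else 0) = ∑ i ∈ T, f i := by
      rw [Finset.sum_ite_mem]
      simp
    rw [this]
    have : ∑ i ∈ T, f i = (u.map f).sum := rfl
    rw [this, hmap]
    simpa using hsum
  · have hcard : T.card = k := by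
      have h1 : T.card = (u.map f).card := by simp [hT, Multiset.card_map]
      rw [h1, hmap]
      simp [min_eq_left hk]
    rw [← hcard]
    apply Finset.card_le_card
    intro i hi
    have hiS : i ∈ S := hTS hi
    have hlt : τ i < ⊤ := by simpa [hS] using hiS
    simp only [Finset.mem_filter, Finset.mem_univ, true_and]
    rw [if_pos hi]
    rw [hf]
    rw [ENat.coe_toNat hlt.ne]
end
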